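/- Let L ≥ 3 and let S ⊆ Λ_L. For k ∈ ZMod L let c_k = |{j ∈ ZMod L : (k,j) ∈ S}| be the number of particles in column k, and let S' = {(k, j mod L) : k ∈ ZMod L, 0 ≤ j < c_k} be the configuration obtained by stacking the particles of each column from height 0 upward. Then |S'| = |S| and e(S') ≥ e(S): the column-stacking compression does not decrease the number of adjacent occupied pairs. -/

import Mathlib

open scoped Classical

noncomputable section

/-- A site of the discrete torus `Λ_L`. -/
abbrev Site (L : ℕ) := ZMod L × ZMod L

/-- Two sites of the discrete torus are adjacent if their difference is a unit vector. -/
def torusAdj (L : ℕ) (u v : Site L) : Prop :=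
  u - v = (1, 0) ∨ u - v = (-1, 0) ∨ u - v = (0, 1) ∨ u - v = (0, -1)

/-- `e(S)`: the number of unordered pairs of adjacent sites contained in `S`. -/
def torusE (L : ℕ) (S : Finset (Site L)) : ℕ :=
  ((S ×ˢ S).filter fun p => torusAdj L p.1 p.2).card / 2

/-- `c_k`: the number of particles of `S` in the column of index `k`. -/
def colCount (L : ℕ) (S : Finset (Site L)) (k : ZMod L) : ℕ :=
  (S.filter fun u => u.1 = k).card

/-- The column-stacking compression of `S`: in each column the particles are stacked
from height `0` upward, i.e. `S' = {(k, j mod L) : 0 ≤ j < c_k}`. -/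
def stacked (L : ℕ) (S : Finset (Site L)) : Finset (Site L) :=
  (S.image Prod.fst).biUnion fun k =>
    (Finset.range (colCount L S k)).image fun j => (k, (j : ZMod L))

namespace StackAux

variable {L : ℕ} [NeZero L]

lemma colCount_le (hL : 0 < L) (S : Finset (Site L)) (k : ZMod L) :
    colCount L S k ≤ L := by
  have h : (S.filter fun u => u.1 = k).card ≤ (Finset.univ : Finset (ZMod L)).card := by
    apply Finset.card_le_card_of_injOn (fun u => u.2)
    · intro u _; exact Finset.mem_univ _
    · intro a ha b hb hab
      simp only [Finset.coe_filter, Set.mem_setOf_eq] at ha hb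
      exact Prod.ext (ha.2.trans hb.2.symm) hab
  simpa [ZMod.card, colCount] using h

lemma mem_classical_bind {α β : Type} (s : Finset α) (f : α → β) (x : β) :
    x ∈ (@bind Finset (@Monad.toBind Finset (@Finset.instMonad Classical.propDecidable)) α β s
      fun a => @pure Finset
        (@Applicative.toPure Finset (@Monad.toApplicative Finset
          (@Finset.instMonad Classical.propDecidable))) β (f a))
    ↔ ∃ a ∈ s, f a = x := by
  letI : DecidableEq β := fun a b => Classical.propDecidable _
  have h : (@bind Finset (@Monad.toBind Finset (@Finset.instMonad Classical.propDecidable)) α β s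
      fun a => @pure Finset
        (@Applicative.toPure Finset (@Monad.toApplicative Finset
          (@Finset.instMonad Classical.propDecidable))) β (f a))
      = s.sup (fun a => {f a}) := rfl
  rw [h, Finset.sup_singleton_apply]
  exact Finset.mem_image

lemma stacked_eq (S : Finset (Site L)) :
    stacked L S = (S.image Prod.fst).biUnion fun k =>
      (Finset.range (colCount L S k)).image fun j : ℕ => ((k, ((j : ℕ) : ZMod L)) : Site L) := by
  unfold stacked
  congr 1
  funext k
  ext v
  constructor
  · intro h
    obtain ⟨j, hj, hv⟩ := Finset.mem_image.mp h
    rw [mem_classical_bind] at hj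
    obtain ⟨n, hn, hjn⟩ := hj
    subst hjn
    exact Finset.mem_image.mpr ⟨n, hn, hv⟩
  · intro h
    obtain ⟨n, hn, hv⟩ := Finset.mem_image.mp h
    exact Finset.mem_image.mpr
      ⟨(n : ZMod L), (mem_classical_bind _ _ _).mpr ⟨n, hn, rfl⟩, hv⟩

lemma mem_stacked (hL : 0 < L) (S : Finset (Site L)) (v : Site L) :
    v ∈ stacked L S ↔ v.2.val < colCount L S v.1 := by
  rw [stacked_eq]
  constructor
  · intro hv
    obtain ⟨k, hk, hv⟩ := Finset.mem_biUnion.mp hv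
    obtain ⟨j, hj, hveq⟩ := Finset.mem_image.mp hv
    rw [Finset.mem_range] at hj
    subst hveq
    show ((j : ZMod L)).val < colCount L S k
    rw [ZMod.val_cast_of_lt (lt_of_lt_of_le hj (colCount_le hL S k))]
    exact hj
  · intro hv
    refine Finset.mem_biUnion.mpr ⟨v.1, ?_, Finset.mem_image.mpr
      ⟨v.2.val, Finset.mem_range.mpr hv, Prod.ext rfl (ZMod.natCast_zmod_val v.2)⟩⟩
    have hpos : 0 < colCount L S v.1 := lt_of_le_of_lt (Nat.zero_le _) hv
    obtain ⟨u, hu⟩ := Finset.card_pos.mp hpos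
    simp only [Finset.mem_filter] at hu
    exact Finset.mem_image.mpr ⟨u, hu.1, hu.2⟩

/-- the number of sites in column `k` at height `< c`. -/
lemma card_col_lt (hL : 0 < L) (k : ZMod L) {c : ℕ} (hc : c ≤ L) :
    (Finset.univ.filter fun v : Site L => v.1 = k ∧ v.2.val < c).card = c := by
  have h : (Finset.univ.filter fun v : Site L => v.1 = k ∧ v.2.val < c).card
      = (Finset.range c).card := by
    apply Finset.card_bij (fun v _ => v.2.val)
    · intro v hv
      simp only [Finset.mem_filter] at hv
      exact Finset.mem_range.mpr hv.2.2
    · intro a ha b hb hab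
      simp only [Finset.mem_filter] at ha hb
      exact Prod.ext (ha.2.1.trans hb.2.1.symm) (ZMod.val_injective L hab)
    · intro n hn
      rw [Finset.mem_range] at hn
      refine ⟨(k, (n : ZMod L)), Finset.mem_filter.mpr ⟨Finset.mem_univ _, rfl, ?_⟩,
        ZMod.val_cast_of_lt (lt_of_lt_of_le hn hc)⟩
      show ((n : ZMod L)).val < c
      rw [ZMod.val_cast_of_lt (lt_of_lt_of_le hn hc)]
      exact hn
  rw [h, Finset.card_range]

lemma colCount_stacked (hL : 0 < L) (S : Finset (Site L)) (k : ZMod L) :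
    colCount L (stacked L S) k = colCount L S k := by
  have hset : (stacked L S).filter (fun u => u.1 = k)
      = Finset.univ.filter (fun v : Site L => v.1 = k ∧ v.2.val < colCount L S k) := by
    ext v
    simp only [Finset.mem_filter, Finset.mem_univ, true_and, mem_stacked hL]
    constructor
    · rintro ⟨h1, h2⟩
      exact ⟨h2, by rw [← h2]; exact h1⟩
    · rintro ⟨h1, h2⟩
      exact ⟨by rw [h1]; exact h2, h1⟩
  rw [show colCount L (stacked L S) k = ((stacked L S).filter (fun u => u.1 = k)).card from rfl,
    hset, card_col_lt hL k (colCount_le hL S k)]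

lemma card_eq_sum_colCount (S : Finset (Site L)) :
    S.card = ∑ k : ZMod L, colCount L S k := by
  simpa [colCount] using
    Finset.card_eq_sum_card_fiberwise (f := Prod.fst) (s := S) (t := Finset.univ)
      (fun v _ => Finset.mem_univ _)

lemma card_pair_shift (S : Finset (Site L)) (d : Site L) :
    ((S ×ˢ S).filter fun p => p.1 - p.2 = d).card
      = (S.filter fun v => v + d ∈ S).card := by
  apply Finset.card_bij (fun p _ => p.2)
  · intro p hp
    simp only [Finset.mem_filter, Finset.mem_product] at hp ⊢
    refine ⟨hp.1.2, ?_⟩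
    have h1 : p.1 = d + p.2 := by
      have := hp.2; rwa [sub_eq_iff_eq_add] at this
    have h2 : p.2 + d = p.1 := by rw [h1, add_comm]
    rw [h2]; exact hp.1.1
  · intro a ha b hb hab
    simp only [Finset.mem_filter, Finset.mem_product] at ha hb
    have h1 : a.1 = d + a.2 := by have := ha.2; rwa [sub_eq_iff_eq_add] at this
    have h2 : b.1 = d + b.2 := by have := hb.2; rwa [sub_eq_iff_eq_add] at this
    exact Prod.ext (by rw [h1, h2, hab]) hab
  · intro v hv
    simp only [Finset.mem_filter] at hv
    refine ⟨(v + d, v), ?_, rfl⟩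
    simp only [Finset.mem_filter, Finset.mem_product]
    exact ⟨⟨hv.2, hv.1⟩, by abel⟩

lemma two_ne_zero' (hL : 3 ≤ L) : (2 : ZMod L) ≠ 0 := by
  intro h
  have h2 : ((2 : ℕ) : ZMod L) = 0 := by exact_mod_cast h
  have hv := ZMod.val_cast_of_lt (show (2 : ℕ) < L by omega)
  rw [h2] at hv
  simp [ZMod.val_zero] at hv

lemma one_ne_zero' (hL : 3 ≤ L) : (1 : ZMod L) ≠ 0 := by
  intro h
  have h2 : ((1 : ℕ) : ZMod L) = 0 := by exact_mod_cast h
  have hv := ZMod.val_cast_of_lt (show (1 : ℕ) < L by omega)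
  rw [h2] at hv
  simp [ZMod.val_zero] at hv

/-- The edge count as a sum of two directed counts. -/
lemma torusE_eq (hL : 3 ≤ L) (S : Finset (Site L)) :
    torusE L S = (S.filter fun v => v + ((1 : ZMod L), (0 : ZMod L)) ∈ S).card
               + (S.filter fun v => v + ((0 : ZMod L), (1 : ZMod L)) ∈ S).card := by
  have h2 := two_ne_zero' hL
  have h1 := one_ne_zero' hL
  set Hf := (S ×ˢ S).filter
      (fun p => p.1 - p.2 = ((1 : ZMod L), (0 : ZMod L)) ∨ p.1 - p.2 = (0, 1)) with hHf
  have hswap : ∀ p : Site L × Site L, p ∈ Hf.image Prod.swap ↔ p.swap ∈ Hf := by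
    intro p
    constructor
    · rintro hp
      obtain ⟨q, hq, hqp⟩ := Finset.mem_image.mp hp
      rw [← hqp, Prod.swap_swap]; exact hq
    · intro hp
      exact Finset.mem_image.mpr ⟨p.swap, hp, Prod.swap_swap p⟩
  have hunion : (S ×ˢ S).filter (fun p => torusAdj L p.1 p.2)
      = Hf ∪ Hf.image Prod.swap := by
    ext p
    rw [Finset.mem_filter, Finset.mem_union, hswap]
    simp only [Finset.mem_union, hswap, hHf, Finset.mem_filter, Finset.mem_product,
      Prod.fst_swap, Prod.snd_swap, torusAdj]
    constructor
    · rintro ⟨hps, h⟩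
      rcases h with h | h | h | h
      · exact Or.inl ⟨hps, Or.inl h⟩
      · refine Or.inr ⟨⟨hps.2, hps.1⟩, Or.inl ?_⟩
        rw [← neg_sub, h]; simp
      · exact Or.inl ⟨hps, Or.inr h⟩
      · refine Or.inr ⟨⟨hps.2, hps.1⟩, Or.inr ?_⟩
        rw [← neg_sub, h]; simp
    · rintro (⟨hps, h | h⟩ | ⟨hps, h | h⟩)
      · exact ⟨hps, Or.inl h⟩
      · exact ⟨hps, Or.inr (Or.inr (Or.inl h))⟩
      · refine ⟨⟨hps.2, hps.1⟩, Or.inr (Or.inl ?_)⟩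
        rw [← neg_sub p.2 p.1, h]; simp
      · refine ⟨⟨hps.2, hps.1⟩, Or.inr (Or.inr (Or.inr ?_))⟩
        rw [← neg_sub p.2 p.1, h]; simp
  have hdisj : Disjoint Hf (Hf.image Prod.swap) := by
    rw [Finset.disjoint_left]
    intro p hp hp'
    rw [hswap] at hp'
    simp only [hHf, Finset.mem_filter, Prod.fst_swap, Prod.snd_swap] at hp hp'
    have hsum : (p.1 - p.2) + (p.2 - p.1) = 0 := by abel
    rcases hp.2 with ha | ha <;> rcases hp'.2 with hb | hb <;>
      rw [ha, hb] at hsum <;>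
      · rw [Prod.ext_iff] at hsum
        simp only [Prod.fst_add, Prod.snd_add, Prod.fst_zero, Prod.snd_zero] at hsum
        first
        | exact absurd (by linear_combination hsum.1 : (2 : ZMod L) = 0) h2
        | exact absurd (by linear_combination hsum.1 : (1 : ZMod L) = 0) h1
        | exact absurd (by linear_combination hsum.2 : (2 : ZMod L) = 0) h2
        | exact absurd (by linear_combination hsum.2 : (1 : ZMod L) = 0) h1
  have hcard2 : ((S ×ˢ S).filter (fun p => torusAdj L p.1 p.2)).card = 2 * Hf.card := by
    rw [hunion, Finset.card_union_of_disjoint hdisj,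
      Finset.card_image_of_injective _ Prod.swap_injective]
    ring
  have hsplit : Hf = ((S ×ˢ S).filter fun p => p.1 - p.2 = ((1 : ZMod L), (0 : ZMod L)))
      ∪ ((S ×ˢ S).filter fun p => p.1 - p.2 = ((0 : ZMod L), (1 : ZMod L))) := by
    rw [hHf, Finset.filter_or]
  have hdisj2 : Disjoint
      ((S ×ˢ S).filter fun p => p.1 - p.2 = ((1 : ZMod L), (0 : ZMod L)))
      ((S ×ˢ S).filter fun p => p.1 - p.2 = ((0 : ZMod L), (1 : ZMod L))) := by
    rw [Finset.disjoint_left]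
    intro p hp hp'
    simp only [Finset.mem_filter] at hp hp'
    have : ((1 : ZMod L), (0 : ZMod L)) = ((0 : ZMod L), (1 : ZMod L)) := hp.2 ▸ hp'.2
    rw [Prod.ext_iff] at this
    exact h1 this.1
  have hfin : Hf.card = (S.filter fun v => v + ((1 : ZMod L), (0 : ZMod L)) ∈ S).card
      + (S.filter fun v => v + ((0 : ZMod L), (1 : ZMod L)) ∈ S).card := by
    rw [hsplit, Finset.card_union_of_disjoint hdisj2, card_pair_shift, card_pair_shift]
  rw [torusE, hcard2, Nat.mul_div_cancel_left _ (by norm_num), hfin]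

lemma card_filter_fiber (S : Finset (Site L)) (P : Site L → Prop) [DecidablePred P] :
    (S.filter P).card = ∑ k : ZMod L, (S.filter fun v => P v ∧ v.1 = k).card := by
  rw [Finset.card_eq_sum_card_fiberwise (f := Prod.fst) (t := Finset.univ)
    (fun v _ => Finset.mem_univ _)]
  congr 1
  ext k
  rw [Finset.filter_filter]

/-- horizontal directed edges out of column `k`, for the original set. -/
lemma Hk_le (S : Finset (Site L)) (k : ZMod L) :
    (S.filter fun v => v + ((1 : ZMod L), (0 : ZMod L)) ∈ S ∧ v.1 = k).card
      ≤ min (colCount L S k) (colCount L S (k + 1)) := by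
  apply le_min
  · apply Finset.card_le_card
    intro v hv
    simp only [Finset.mem_filter] at hv ⊢
    exact ⟨hv.1, hv.2.2⟩
  · apply Finset.card_le_card_of_injOn (fun v => v + ((1 : ZMod L), (0 : ZMod L)))
    · intro v hv
      simp only [Finset.mem_filter, Finset.mem_coe] at hv ⊢
      refine ⟨hv.2.1, ?_⟩
      show v.1 + 1 = k + 1
      rw [hv.2.2]
    · intro a _ b _ h
      exact add_right_cancel h

/-- horizontal directed edges out of column `k`, for the stacked set. -/
lemma Hk_stacked (hL : 0 < L) (S : Finset (Site L)) (k : ZMod L) :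
    ((stacked L S).filter fun v =>
        v + ((1 : ZMod L), (0 : ZMod L)) ∈ stacked L S ∧ v.1 = k).card
      = min (colCount L S k) (colCount L S (k + 1)) := by
  have hset : ((stacked L S).filter fun v =>
        v + ((1 : ZMod L), (0 : ZMod L)) ∈ stacked L S ∧ v.1 = k)
      = Finset.univ.filter fun v : Site L => v.1 = k ∧
          v.2.val < min (colCount L S k) (colCount L S (k + 1)) := by
    ext v
    simp only [Finset.mem_filter, Finset.mem_univ, true_and, mem_stacked hL,
      Prod.fst_add, Prod.snd_add, add_zero, lt_min_iff]
    constructor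
    · rintro ⟨h1, h2, h3⟩
      exact ⟨h3, by rw [← h3]; exact h1, by rw [← h3]; exact h2⟩
    · rintro ⟨h1, h2, h3⟩
      exact ⟨by rw [h1]; exact h2, by rw [h1]; exact h3, h1⟩
  rw [hset, card_col_lt hL k (le_trans (min_le_left _ _) (colCount_le hL S k))]

/-- Identify a column of `S` with a subset of `ZMod L`. -/
lemma card_snd_col (S : Finset (Site L)) (k : ZMod L) (q : ZMod L → Prop)
    [DecidablePred q] [DecidablePred fun v : Site L => q v.2 ∧ v.1 = k] :
    (S.filter fun v => q v.2 ∧ v.1 = k).card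
      = ((Finset.univ.filter fun j : ZMod L => (k, j) ∈ S).filter q).card := by
  apply Finset.card_bij (fun v _ => v.2)
  · intro v hv
    simp only [Finset.mem_filter, Finset.mem_univ, true_and] at hv ⊢
    refine ⟨?_, hv.2.1⟩
    rw [show ((k, v.2) : Site L) = v from Prod.ext hv.2.2.symm rfl]
    exact hv.1
  · intro a ha b hb hab
    simp only [Finset.mem_filter] at ha hb
    exact Prod.ext (ha.2.2.trans hb.2.2.symm) hab
  · intro j hj
    simp only [Finset.mem_filter, Finset.mem_univ, true_and] at hj
    exact ⟨(k, j), Finset.mem_filter.mpr ⟨hj.1, hj.2, rfl⟩, rfl⟩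

lemma colCount_eq_card_col (S : Finset (Site L)) (k : ZMod L) :
    colCount L S k = (Finset.univ.filter fun j : ZMod L => (k, j) ∈ S).card := by
  show (S.filter fun u => u.1 = k).card = _
  apply Finset.card_bij (fun v _ => v.2)
  · intro v hv
    simp only [Finset.mem_filter, Finset.mem_univ, true_and] at hv ⊢
    rw [show ((k, v.2) : Site L) = v from Prod.ext hv.2.symm rfl]
    exact hv.1
  · intro a ha b hb hab
    simp only [Finset.mem_filter] at ha hb
    exact Prod.ext (ha.2.trans hb.2.symm) hab
  · intro j hj
    simp only [Finset.mem_filter, Finset.mem_univ, true_and] at hj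
    exact ⟨(k, j), Finset.mem_filter.mpr ⟨hj, rfl⟩, rfl⟩

/-- In a cycle, a proper subset has at least one "top" element. -/
lemma cycle_succ_bound (hL : 0 < L) (T : Finset (ZMod L)) (hT : T.card < L) :
    (T.filter fun j => j + 1 ∈ T).card ≤ T.card - 1 := by
  rcases T.eq_empty_or_nonempty with rfl | ⟨j0, hj0⟩
  · simp
  have hex : ∃ j ∈ T, j + 1 ∉ T := by
    by_contra h
    push_neg at h
    have hall : ∀ n : ℕ, j0 + (n : ZMod L) ∈ T := by
      intro n
      induction n with
      | zero => simpa using hj0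
      | succ m ih =>
          have := h _ ih
          push_cast
          rw [← add_assoc]
          exact this
    have huniv : ∀ x : ZMod L, x ∈ T := by
      intro x
      have := hall (x - j0).val
      rwa [ZMod.natCast_zmod_val, add_sub_cancel] at this
    have : T = Finset.univ := Finset.eq_univ_iff_forall.mpr huniv
    rw [this] at hT
    simp [ZMod.card] at hT
  obtain ⟨j, hj, hj1⟩ := hex
  have hsub : (T.filter fun a => a + 1 ∈ T) ⊆ T.erase j := by
    intro a ha
    simp only [Finset.mem_filter] at ha
    refine Finset.mem_erase.mpr ⟨?_, ha.1⟩
    rintro rfl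
    exact hj1 ha.2
  calc (T.filter fun j => j + 1 ∈ T).card ≤ (T.erase j).card := Finset.card_le_card hsub
    _ = T.card - 1 := Finset.card_erase_of_mem hj

lemma val_add_one {j : ZMod L} {c : ℕ} (hL : 0 < L) (hc : c < L) :
    (j.val < c ∧ (j + 1).val < c) ↔ j.val + 1 < c := by
  have hval : (j + 1).val = (j.val + 1) % L := by
    have h : j + 1 = ((j.val + 1 : ℕ) : ZMod L) := by
      push_cast [ZMod.natCast_zmod_val]
      ring
    rw [h, ZMod.val_natCast]
  constructor
  · rintro ⟨h1, h2⟩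
    have hlt : j.val + 1 < L := by omega
    rwa [hval, Nat.mod_eq_of_lt hlt] at h2
  · intro h
    have hlt : j.val + 1 < L := by omega
    exact ⟨by omega, by rw [hval, Nat.mod_eq_of_lt hlt]; omega⟩

/-- vertical directed edges in column `k` do not decrease under stacking. -/
lemma Vk_le (hL : 0 < L) (S : Finset (Site L)) (k : ZMod L) :
    (S.filter fun v => v + ((0 : ZMod L), (1 : ZMod L)) ∈ S ∧ v.1 = k).card
      ≤ ((stacked L S).filter fun v =>
          v + ((0 : ZMod L), (1 : ZMod L)) ∈ stacked L S ∧ v.1 = k).card := by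
  have hcL : colCount L S k ≤ L := colCount_le hL S k
  have hrhs : ((stacked L S).filter fun v =>
        v + ((0 : ZMod L), (1 : ZMod L)) ∈ stacked L S ∧ v.1 = k)
      = Finset.univ.filter fun v : Site L => v.1 = k ∧
          (v.2.val < colCount L S k ∧ (v.2 + 1).val < colCount L S k) := by
    ext v
    simp only [Finset.mem_filter, Finset.mem_univ, true_and, mem_stacked hL,
      Prod.fst_add, Prod.snd_add, add_zero]
    constructor
    · rintro ⟨h1, h2, h3⟩
      exact ⟨h3, by rw [← h3]; exact h1, by rw [← h3]; exact h2⟩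
    · rintro ⟨h1, h2, h3⟩
      exact ⟨by rw [h1]; exact h2, by rw [h1]; exact h3, h1⟩
  have hlhs : (S.filter fun v => v + ((0 : ZMod L), (1 : ZMod L)) ∈ S ∧ v.1 = k).card
      = ((Finset.univ.filter fun j : ZMod L => (k, j) ∈ S).filter
          fun j => j + 1 ∈ (Finset.univ.filter fun j : ZMod L => (k, j) ∈ S)).card := by
    have h1 : (S.filter fun v => v + ((0 : ZMod L), (1 : ZMod L)) ∈ S ∧ v.1 = k)
        = S.filter fun v => (k, v.2 + 1) ∈ S ∧ v.1 = k := by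
      ext v
      simp only [Finset.mem_filter]
      constructor
      · rintro ⟨h1, h2, h3⟩
        refine ⟨h1, ?_, h3⟩
        rwa [show ((k, v.2 + 1) : Site L) = v + ((0 : ZMod L), (1 : ZMod L)) from
          Prod.ext (by simp [h3]) (by simp)]
      · rintro ⟨h1, h2, h3⟩
        refine ⟨h1, ?_, h3⟩
        rwa [show v + ((0 : ZMod L), (1 : ZMod L)) = ((k, v.2 + 1) : Site L) from
          Prod.ext (by simp [h3]) (by simp)]
    rw [h1, card_snd_col S k (fun j => (k, j + 1) ∈ S)]
    apply congrArg Finset.card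
    apply Finset.filter_congr
    intro j hj
    simp only [Finset.mem_filter, Finset.mem_univ, true_and]
  rw [hrhs, hlhs]
  rcases eq_or_lt_of_le hcL with hceq | hclt
  · -- full column
    have hall : (Finset.univ.filter fun v : Site L => v.1 = k ∧
          (v.2.val < colCount L S k ∧ (v.2 + 1).val < colCount L S k))
        = Finset.univ.filter fun v : Site L => v.1 = k ∧ v.2.val < colCount L S k := by
      ext v
      simp only [Finset.mem_filter, Finset.mem_univ, true_and]
      constructor
      · rintro ⟨h1, h2, -⟩; exact ⟨h1, h2⟩
      · rintro ⟨h1, h2⟩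
        refine ⟨h1, h2, ?_⟩
        rw [hceq]
        exact ZMod.val_lt _
    rw [hall, card_col_lt hL k hcL]
    calc ((Finset.univ.filter fun j : ZMod L => (k, j) ∈ S).filter
          fun j => j + 1 ∈ (Finset.univ.filter fun j : ZMod L => (k, j) ∈ S)).card
        ≤ (Finset.univ.filter fun j : ZMod L => (k, j) ∈ S).card :=
          Finset.card_le_card (Finset.filter_subset _ _)
      _ = colCount L S k := (colCount_eq_card_col S k).symm
  · -- partial column
    have hall : (Finset.univ.filter fun v : Site L => v.1 = k ∧
          (v.2.val < colCount L S k ∧ (v.2 + 1).val < colCount L S k))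
        = Finset.univ.filter fun v : Site L => v.1 = k ∧ v.2.val < colCount L S k - 1 := by
      ext v
      simp only [Finset.mem_filter, Finset.mem_univ, true_and]
      rw [and_congr_right_iff]
      intro _
      rw [val_add_one hL hclt]
      omega
    rw [hall, card_col_lt hL k (by omega)]
    have hbound := cycle_succ_bound hL (Finset.univ.filter fun j : ZMod L => (k, j) ∈ S)
      (by rw [← colCount_eq_card_col S k]; exact hclt)
    rw [← colCount_eq_card_col S k] at hbound
    omega

end StackAux

/-- the column-stacking compression preserves the number of particles and
does not decrease the number of adjacent occupied pairs. -/
theorem stacking_increases_edges (L : ℕ) (hL : 3 ≤ L) (S : Finset (Site L)) :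
    (stacked L S).card = S.card ∧ torusE L S ≤ torusE L (stacked L S) := by
  have hL0 : 0 < L := by omega
  haveI : NeZero L := ⟨by omega⟩
  constructor
  · rw [StackAux.card_eq_sum_colCount (stacked L S), StackAux.card_eq_sum_colCount S]
    exact Finset.sum_congr rfl fun k _ => StackAux.colCount_stacked hL0 S k
  · rw [StackAux.torusE_eq hL S, StackAux.torusE_eq hL (stacked L S),
      StackAux.card_filter_fiber S (fun v => v + ((1 : ZMod L), (0 : ZMod L)) ∈ S),
      StackAux.card_filter_fiber S (fun v => v + ((0 : ZMod L), (1 : ZMod L)) ∈ S),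
      StackAux.card_filter_fiber (stacked L S)
        (fun v => v + ((1 : ZMod L), (0 : ZMod L)) ∈ stacked L S),
      StackAux.card_filter_fiber (stacked L S)
        (fun v => v + ((0 : ZMod L), (1 : ZMod L)) ∈ stacked L S)]
    apply Nat.add_le_add
    · apply Finset.sum_le_sum
      intro k _
      calc (S.filter fun v => v + ((1 : ZMod L), (0 : ZMod L)) ∈ S ∧ v.1 = k).card
          ≤ min (colCount L S k) (colCount L S (k + 1)) := StackAux.Hk_le S k
        _ = _ := (StackAux.Hk_stacked hL0 S k).symm
    · apply Finset.sum_le_sum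
      intro k _
      exact StackAux.Vk_le hL0 S k
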